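/- arXiv:2306.00732 — 3 statements merged into one kernel-verified Lean document; each statement's English description precedes it below -/
import Mathlib

section
/- Let A = K + S ∈ ℝ^{n×d}, where K ∈ ℝ^{n×d} has rank at most k and every row of S ∈ ℝ^{n×d} has at most s nonzero entries. Then for every 1 ≤ p < ∞, 𝔖^p(A) ≤ d^s·(k+s)^p. -/
open MeasureTheory Matrix Finset

/-- The `i`-th ℓ_p sensitivity of a matrix `A`:
`σ_i^p(A) = sup { |(Ax)_i|^p / ‖Ax‖_p^p : Ax ≠ 0 }` (zero if the set is empty). -/
noncomputable def lpSens (p : ℝ) {R C : Type*} [Fintype R] [Fintype C]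
    (A : Matrix R C ℝ) (i : R) : ℝ :=
  sSup {r : ℝ | ∃ x : C → ℝ, A.mulVec x ≠ 0 ∧
    r = |A.mulVec x i| ^ p / ∑ j, |A.mulVec x j| ^ p}

/-- The total ℓ_p sensitivity `𝔖^p(A) = Σ_i σ_i^p(A)`. -/
noncomputable def totalSens (p : ℝ) {R C : Type*} [Fintype R] [Fintype C]
    (A : Matrix R C ℝ) : ℝ := ∑ i, lpSens p A i

open Module

/-- Generalized Minkowski inequality for finite sums. -/
lemma minkowski_finset {ι m : Type*} [Fintype m] {p : ℝ} (hp : 1 ≤ p)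
    [DecidableEq ι] (s : Finset ι) (F : ι → m → ℝ) (hF : ∀ j i, 0 ≤ F j i) :
    (∑ i, (∑ j ∈ s, F j i) ^ p) ^ (1/p) ≤ ∑ j ∈ s, (∑ i, (F j i) ^ p) ^ (1/p) := by
  have hp0 : (0:ℝ) < p := lt_of_lt_of_le one_pos hp
  induction s using Finset.induction_on with
  | empty =>
      simp [Real.zero_rpow hp0.ne', Real.zero_rpow (by positivity : (1/p : ℝ) ≠ 0), Real.zero_rpow (by positivity : (p:ℝ)⁻¹ ≠ 0)]
  | insert a t hx ih =>
      rw [Finset.sum_insert hx]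
      calc (∑ i, (∑ j ∈ insert a t, F j i) ^ p) ^ (1/p)
          = (∑ i, (F a i + ∑ j ∈ t, F j i) ^ p) ^ (1/p) := by
            simp [Finset.sum_insert hx]
        _ ≤ (∑ i, (F a i) ^ p) ^ (1/p) + (∑ i, (∑ j ∈ t, F j i) ^ p) ^ (1/p) :=
            Real.Lp_add_le_of_nonneg (s := Finset.univ)
              (f := fun i => F a i) (g := fun i => ∑ j ∈ t, F j i) hp (fun i _ => hF a i)
              (fun i _ => Finset.sum_nonneg fun j _ => hF j i)
        _ ≤ (∑ i, (F a i) ^ p) ^ (1/p) + ∑ j ∈ t, (∑ i, (F j i) ^ p) ^ (1/p) := by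
            have := ih
            gcongr

section Auerbach
variable {m : Type*} [Fintype m] [DecidableEq m] {p : ℝ}

private lemma Np_smul (hp0 : (0:ℝ) < p) (c : ℝ) (y : m → ℝ) :
    ∑ i, |(c • y) i| ^ p = |c| ^ p * ∑ i, |y i| ^ p := by
  rw [Finset.mul_sum]
  refine Finset.sum_congr rfl fun i _ => ?_
  rw [Pi.smul_apply, smul_eq_mul, abs_mul, Real.mul_rpow (abs_nonneg _) (abs_nonneg _)]

private lemma Np_pos (hp0 : (0:ℝ) < p) {y : m → ℝ} (hy : y ≠ 0) :
    0 < ∑ i, |y i| ^ p := by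
  obtain ⟨i, hi⟩ := Function.ne_iff.mp hy
  have h1 : (0:ℝ) < |y i| ^ p := Real.rpow_pos_of_pos (abs_pos.mpr hi) p
  calc (0:ℝ) < |y i| ^ p := h1
    _ ≤ ∑ j, |y j| ^ p := Finset.single_le_sum
        (fun j _ => Real.rpow_nonneg (abs_nonneg _) p) (Finset.mem_univ i)

private lemma Np_eq_zero (hp0 : (0:ℝ) < p) {y : m → ℝ} (hy : ∑ i, |y i| ^ p = 0) :
    y = 0 := by
  by_contra h
  exact absurd hy (ne_of_gt (Np_pos hp0 h))

set_option maxHeartbeats 2000000 in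
/-- Auerbach-basis based sensitivity bound for a subspace `V` of `ℓ_p^m`. -/
lemma auerbach_bound (hp : 1 ≤ p) (V : Submodule ℝ (m → ℝ)) :
    ∃ w : m → ℝ, (∀ i, 0 ≤ w i) ∧ (∑ i, w i ≤ (finrank ℝ V : ℝ) ^ p) ∧
      ∀ y ∈ V, ∀ i, |y i| ^ p ≤ w i * ∑ j, |y j| ^ p := by
  have hp0 : (0:ℝ) < p := lt_of_lt_of_le one_pos hp
  have hpne : p ≠ 0 := ne_of_gt hp0
  set r := finrank ℝ V with hr
  let b : Basis (Fin r) ℝ V := Module.finBasis ℝ V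
  set N : V → ℝ := fun v => ∑ i, |(v : m → ℝ) i| ^ p with hNdef
  have hNsmul : ∀ (c : ℝ) (v : V), N (c • v) = |c| ^ p * N v := by
    intro c v
    show ∑ i, |((c • v : V) : m → ℝ) i| ^ p = |c| ^ p * ∑ i, |(v : m → ℝ) i| ^ p
    exact Np_smul (m := m) hp0 c (v : m → ℝ)
  have hNpos : ∀ v : V, v ≠ 0 → 0 < N v := by
    intro v hv
    exact Np_pos hp0 (by simpa using hv)
  set Sph : Set V := {v | N v = 1} with hSph
  set Box : Set (Fin r → V) := Set.univ.pi fun _ => Sph with hBox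
  -- continuity of `N`
  have hNcont : Continuous N := by
    apply continuous_finset_sum
    intro i _
    exact (Real.continuous_rpow_const (le_of_lt hp0)).comp
      (continuous_abs.comp ((continuous_apply i).comp continuous_subtype_val))
  -- the sphere is compact
  have hSphcompact : IsCompact Sph := by
    apply Metric.isCompact_of_isClosed_isBounded
    · exact isClosed_eq hNcont continuous_const
    · rw [Metric.isBounded_iff_subset_closedBall 0]
      refine ⟨1, fun v hv => ?_⟩
      have hv1 : N v = 1 := hv
      simp only [Metric.mem_closedBall, dist_zero_right]
      have : ‖(v : m → ℝ)‖ ≤ 1 := by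
        rw [pi_norm_le_iff_of_nonneg zero_le_one]
        intro i
        rw [Real.norm_eq_abs]
        by_contra hgt
        push_neg at hgt
        have h1 : (1:ℝ) < |(v : m → ℝ) i| ^ p :=
          (Real.one_lt_rpow_iff_of_pos (lt_trans one_pos hgt)).mpr (Or.inl ⟨hgt, hp0⟩)
        have h2 : |(v : m → ℝ) i| ^ p ≤ N v :=
          Finset.single_le_sum (fun j _ => Real.rpow_nonneg (abs_nonneg _) p)
            (Finset.mem_univ i)
        rw [hv1] at h2
        exact absurd (lt_of_lt_of_le h1 h2) (lt_irrefl _)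
      simpa using this
  have hBoxcompact : IsCompact Box := isCompact_univ_pi fun _ => hSphcompact
  -- the determinant-modulus function
  set F : (Fin r → V) → ℝ := fun u => |b.det u| with hF
  have hFcont : Continuous F := by
    have h1 : Continuous fun u : Fin r → V => (b.toMatrix u).det := by
      apply Continuous.matrix_det
      apply continuous_matrix
      intro i j
      have : Continuous fun v : V => b.repr v i :=
        (LinearMap.continuous_of_finiteDimensional
          ((Finsupp.lapply i).comp (b.repr : V ≃ₗ[ℝ] (Fin r →₀ ℝ)).toLinearMap))
      exact this.comp (continuous_apply j)
    have : F = fun u => |(b.toMatrix u).det| := by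
      funext u; show |b.det u| = _; rw [Basis.det_apply]
    rw [this]
    exact continuous_abs.comp h1
  -- a normalized basis lies in the box and has positive `F`
  set u0 : Fin r → V := fun j => ((N (b j)) ^ (-(1/p))) • b j with hu0
  have hNbpos : ∀ j, 0 < N (b j) := fun j => hNpos _ (b.ne_zero j)
  have hscale : ∀ (v : V), v ≠ 0 → N (((N v) ^ (-(1/p))) • v) = 1 := by
    intro v hv
    have hvpos := hNpos v hv
    rw [hNsmul, abs_of_pos (Real.rpow_pos_of_pos hvpos _), ← Real.rpow_mul hvpos.le]
    have hexp : -(1/p) * p = -1 := by field_simp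
    rw [hexp, Real.rpow_neg_one, inv_mul_cancel₀ (ne_of_gt hvpos)]
  have hu0mem : u0 ∈ Box := by
    intro j _
    exact hscale (b j) (b.ne_zero j)
  have hFu0 : 0 < F u0 := by
    show 0 < |b.det fun j => ((N (b j)) ^ (-(1/p))) • b j|
    have : (b.det fun j => ((N (b j)) ^ (-(1/p))) • b j)
        = (∏ j, (N (b j)) ^ (-(1/p))) • b.det (fun j => b j) := by
      exact b.det.toMultilinearMap.map_smul_univ _ _
    rw [this]
    simp only [smul_eq_mul, Basis.det_self]
    have : ∀ j : Fin r, N (b j) ^ (-(1/p)) ≠ 0 :=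
      fun j => ne_of_gt (Real.rpow_pos_of_pos (hNbpos j) _)
    have hprod : (∏ j, (N (b j)) ^ (-(1/p))) ≠ 0 := Finset.prod_ne_zero_iff.mpr fun j _ => this j
    simpa using abs_pos.mpr hprod
  -- maximize `F` on the box
  obtain ⟨u, huBox, humax⟩ :=
    hBoxcompact.exists_isMaxOn ⟨u0, hu0mem⟩ hFcont.continuousOn
  have hFu : 0 < F u := lt_of_lt_of_le hFu0 (humax hu0mem)
  have hdet : b.det u ≠ 0 := fun h => by simp [hF, h] at hFu
  have huSph : ∀ j, N (u j) = 1 := fun j => huBox j trivial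
  -- `u` is a basis
  obtain ⟨hli, hsp⟩ := Module.Basis.is_basis_iff_det b |>.mpr (isUnit_iff_ne_zero.mpr hdet)
  let bu : Basis (Fin r) ℝ V := Basis.mk hli hsp.ge
  have hbu : ∀ j, bu j = u j := fun j => by simp [bu]
  -- determinant expansion
  have hdetrel : ∀ (y : V) (j : Fin r),
      b.det (Function.update u j y) = bu.repr y j * b.det u := by
    intro y j
    conv_lhs => rw [← bu.sum_repr y]
    simp only [hbu]
    rw [b.det.map_update_sum Finset.univ j (fun i => bu.repr y i • u i) u]
    rw [Finset.sum_eq_single j]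
    · rw [AlternatingMap.map_update_smul, smul_eq_mul, Function.update_eq_self]
    · intro i _ hij
      rw [AlternatingMap.map_update_smul, smul_eq_mul]
      have : b.det (Function.update u j (u i)) = 0 := by
        apply AlternatingMap.map_eq_zero_of_eq _ _ (i := i) (j := j)
        · rw [Function.update_of_ne hij, Function.update_self]
        · exact hij
      rw [this, mul_zero]
    · intro h
      exact absurd (Finset.mem_univ j) h
  -- coefficient bound
  have hcoef : ∀ (y : V) (j : Fin r), |bu.repr y j| ^ p ≤ N y := by
    intro y j
    by_cases hy : y = 0
    · subst hy
      simp [Real.zero_rpow hpne, hNdef, Real.rpow_nonneg,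
        Finset.sum_nonneg fun i _ => Real.rpow_nonneg (abs_nonneg _) p]
    · have hvpos := hNpos y hy
      set z : V := ((N y) ^ (-(1/p))) • y with hz
      have hzS : N z = 1 := hscale y hy
      have hupd : Function.update u j z ∈ Box := by
        intro j' _
        by_cases h : j' = j
        · subst h; rw [Function.update_self]; exact hzS
        · rw [Function.update_of_ne h]; exact huSph j'
      have hle : |b.det (Function.update u j z)| ≤ |b.det u| := humax hupd
      rw [hdetrel z j, abs_mul] at hle
      have hcz : |bu.repr z j| ≤ 1 := by
        have hdpos : 0 < |b.det u| := abs_pos.mpr hdet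
        nlinarith [abs_nonneg (bu.repr z j)]
      -- relate repr y and repr z
      have hyz : y = ((N y) ^ (1/p)) • z := by
        rw [hz, smul_smul, ← Real.rpow_add hvpos]
        norm_num
      have hry : bu.repr y j = ((N y) ^ (1/p)) * bu.repr z j := by
        conv_lhs => rw [hyz]
        simp
      rw [hry, abs_mul, abs_of_pos (Real.rpow_pos_of_pos hvpos _)]
      calc ((N y) ^ (1/p) * |bu.repr z j|) ^ p
          ≤ ((N y) ^ (1/p) * 1) ^ p := by
            gcongr
        _ = N y := by
            rw [mul_one, ← Real.rpow_mul (le_of_lt hvpos), one_div,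
              inv_mul_cancel₀ hpne, Real.rpow_one]
  -- define the weight function
  refine ⟨fun i => (∑ j, |(u j : m → ℝ) i|) ^ p, ?_, ?_, ?_⟩
  · intro i
    exact Real.rpow_nonneg (Finset.sum_nonneg fun j _ => abs_nonneg _) p
  · -- sum bound via Minkowski
    have hmink := minkowski_finset (m := m) hp Finset.univ
      (fun j i => |(u j : m → ℝ) i|) (fun j i => abs_nonneg _)
    have hone : ∀ j : Fin r, (∑ i, |(u j : m → ℝ) i| ^ p) ^ (1/p) = 1 := by
      intro j
      rw [show (∑ i, |(u j : m → ℝ) i| ^ p) = 1 from huSph j, Real.one_rpow]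
    rw [Finset.sum_congr rfl (fun j _ => hone j), Finset.sum_const,
      Finset.card_univ, Fintype.card_fin, nsmul_eq_mul, mul_one] at hmink
    have hAnn : 0 ≤ ∑ i, (∑ j, |(u j : m → ℝ) i|) ^ p :=
      Finset.sum_nonneg fun i _ =>
        Real.rpow_nonneg (Finset.sum_nonneg fun j _ => abs_nonneg _) p
    calc ∑ i, (∑ j, |(u j : m → ℝ) i|) ^ p
        = ((∑ i, (∑ j, |(u j : m → ℝ) i|) ^ p) ^ (1/p)) ^ p := by
          rw [← Real.rpow_mul hAnn, one_div, inv_mul_cancel₀ hpne, Real.rpow_one]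
      _ ≤ ((r : ℝ)) ^ p :=
          Real.rpow_le_rpow (Real.rpow_nonneg hAnn _) hmink hp0.le
  · -- pointwise bound
    intro y hy i
    set Y : V := ⟨y, hy⟩ with hY
    have hyrep : y i = ∑ j, bu.repr Y j * (u j : m → ℝ) i := by
      conv_lhs => rw [show y = (Y : m → ℝ) from rfl, ← bu.sum_repr Y]
      simp [hbu]
    have habs : |y i| ≤ ∑ j, |bu.repr Y j| * |(u j : m → ℝ) i| := by
      rw [hyrep]
      exact (Finset.abs_sum_le_sum_abs _ _).trans
        (le_of_eq (Finset.sum_congr rfl fun j _ => abs_mul _ _))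
    have hcb : ∀ j, |bu.repr Y j| ≤ (N Y) ^ (1/p) := by
      intro j
      have := hcoef Y j
      calc |bu.repr Y j|
          = (|bu.repr Y j| ^ p) ^ (1/p) := by
            rw [← Real.rpow_mul (abs_nonneg _), mul_one_div, div_self hpne, Real.rpow_one]
        _ ≤ (N Y) ^ (1/p) :=
            Real.rpow_le_rpow (Real.rpow_nonneg (abs_nonneg _) _) this
              (one_div_nonneg.mpr hp0.le)
    have hNY : N Y = ∑ j, |y j| ^ p := rfl
    have h2 : |y i| ≤ (N Y) ^ (1/p) * ∑ j, |(u j : m → ℝ) i| := by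
      rw [Finset.mul_sum]
      refine habs.trans (Finset.sum_le_sum fun j _ => ?_)
      exact mul_le_mul_of_nonneg_right (hcb j) (abs_nonneg _)
    calc |y i| ^ p
        ≤ ((N Y) ^ (1/p) * ∑ j, |(u j : m → ℝ) i|) ^ p :=
          Real.rpow_le_rpow (abs_nonneg _) h2 hp0.le
      _ = (∑ j, |(u j : m → ℝ) i|) ^ p * N Y := by
          have hNYnn : 0 ≤ N Y :=
            Finset.sum_nonneg fun j _ => Real.rpow_nonneg (abs_nonneg _) p
          have hs1 : 0 ≤ (∑ j, |(u j : m → ℝ) i|) :=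
            Finset.sum_nonneg fun j _ => abs_nonneg _
          rw [Real.mul_rpow (Real.rpow_nonneg hNYnn _) hs1, ← Real.rpow_mul hNYnn,
            one_div, inv_mul_cancel₀ hpne, Real.rpow_one, mul_comm]
      _ = _ := by rw [hNY]

end Auerbach

set_option maxHeartbeats 2000000 in
/-- **Sensitivity bounds for low rank + sparse matrices**. -/
theorem total_sensitivity_low_rank_plus_sparse
    (n d k s : ℕ) (K S : Matrix (Fin n) (Fin d) ℝ) (p : ℝ) (hp : 1 ≤ p)
    (hK : K.rank ≤ k)
    (hS : ∀ i, (Finset.univ.filter fun j => S i j ≠ 0).card ≤ s) :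
    totalSens p (K + S) ≤ (d : ℝ) ^ s * ((k : ℝ) + s) ^ p := by
  classical
  have hp0 : (0:ℝ) < p := lt_of_lt_of_le one_pos hp
  set A : Matrix (Fin n) (Fin d) ℝ := K + S with hA
  have hks : (0:ℝ) ≤ (k : ℝ) + s := by positivity
  rcases Nat.eq_zero_or_pos d with hd | hd
  · -- trivial case : no columns
    subst hd
    have hzero : ∀ i, lpSens p A i = 0 := by
      intro i
      have hempty : {r : ℝ | ∃ x : Fin 0 → ℝ, A.mulVec x ≠ 0 ∧
          r = |A.mulVec x i| ^ p / ∑ j, |A.mulVec x j| ^ p} = ∅ := by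
        rw [Set.eq_empty_iff_forall_notMem]
        rintro r ⟨x, hx, -⟩
        apply hx
        funext i'
        simp [Matrix.mulVec, dotProduct]
      rw [lpSens, hempty, Real.sSup_empty]
    rw [totalSens]
    rw [Finset.sum_congr rfl fun i _ => hzero i, Finset.sum_const, smul_zero]
    positivity
  · -- main case
    -- choose a support superset of size `min s d` for each row
    have hTex : ∀ i : Fin n, ∃ T : Finset (Fin d),
        (Finset.univ.filter fun j => S i j ≠ 0) ⊆ T ∧ T.card = min s d := by
      intro i
      have hcard : (Finset.univ.filter fun j => S i j ≠ 0).card ≤ d := by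
        simpa using Finset.card_filter_le Finset.univ (fun j => S i j ≠ 0)
      obtain ⟨T, h1, _, h3⟩ := Finset.exists_subsuperset_card_eq (n := min s d)
        (Finset.subset_univ _) (le_min (hS i) hcard)
        (by simpa using min_le_right s d)
      exact ⟨T, h1, h3⟩
    choose t ht1 ht2 using hTex
    -- the per-group bound
    have hgroup : ∀ T ∈ Finset.powersetCard (min s d) (Finset.univ : Finset (Fin d)),
        ∑ i ∈ Finset.univ.filter (fun i => t i = T), lpSens p A i ≤ ((k:ℝ) + s) ^ p := by
      intro T hTmem
      have hTcard : T.card = min s d := (Finset.mem_powersetCard.mp hTmem).2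
      set G : Finset (Fin n) := Finset.univ.filter (fun i => t i = T) with hG
      set Rmap : (Fin n → ℝ) →ₗ[ℝ] ({i // i ∈ G} → ℝ) :=
        LinearMap.funLeft ℝ ℝ (fun i : {i // i ∈ G} => (i : Fin n)) with hRmap
      set V : Submodule ℝ ({i // i ∈ G} → ℝ) :=
        LinearMap.range (Rmap ∘ₗ A.mulVecLin) with hV
      obtain ⟨w, hw0, hwsum, hwpt⟩ := auerbach_bound hp V
      -- rank bound
      have hVle : V ≤ (LinearMap.range (Rmap ∘ₗ K.mulVecLin)) ⊔
          (LinearMap.range (Rmap ∘ₗ S.mulVecLin)) := by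
        rintro y ⟨x, rfl⟩
        refine Submodule.mem_sup.mpr ⟨Rmap (K.mulVecLin x), ⟨x, rfl⟩,
          Rmap (S.mulVecLin x), ⟨x, rfl⟩, ?_⟩
        symm
        show Rmap (A.mulVecLin x) = _
        rw [hA, Matrix.mulVecLin_add, LinearMap.add_apply, map_add]
      have h1 : finrank ℝ (LinearMap.range (Rmap ∘ₗ K.mulVecLin)) ≤ k := by
        rw [LinearMap.range_comp]
        exact le_trans (Submodule.finrank_map_le _ _) hK
      have h2 : finrank ℝ (LinearMap.range (Rmap ∘ₗ S.mulVecLin)) ≤ s := by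
        set E : Finset ({i // i ∈ G} → ℝ) :=
          T.image (fun j => (fun i' : {i // i ∈ G} => S i' j)) with hE
        have hsub : LinearMap.range (Rmap ∘ₗ S.mulVecLin) ≤
            Submodule.span ℝ (E : Set ({i // i ∈ G} → ℝ)) := by
          rintro y ⟨x, rfl⟩
          have : (Rmap ∘ₗ S.mulVecLin) x
              = ∑ j ∈ T, x j • (fun i' : {i // i ∈ G} => S i' j) := by
            funext i'
            have hTi : t (i' : Fin n) = T :=
              (Finset.mem_filter.mp i'.2).2
            have hzero : ∀ j ∈ Finset.univ, j ∉ T → S i' j * x j = 0 := by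
              intro j _ hj
              have : ¬ (S i' j ≠ 0) := by
                intro hne
                apply hj
                rw [← hTi]
                exact ht1 i' (Finset.mem_filter.mpr ⟨Finset.mem_univ _, hne⟩)
              push_neg at this
              rw [this, zero_mul]
            show S.mulVec x i' = _
            rw [Matrix.mulVec, dotProduct, ← Finset.sum_subset
              (Finset.subset_univ T) hzero]
            simp [mul_comm]
          rw [this]
          apply Submodule.sum_smul_mem
          intro j hj
          exact Submodule.subset_span (by
            rw [hE]
            simp only [Finset.coe_image, Set.mem_image, Finset.mem_coe]
            exact ⟨j, hj, rfl⟩)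
        have hspanle : finrank ℝ (Submodule.span ℝ (E : Set ({i // i ∈ G} → ℝ))) ≤ E.card :=
          finrank_span_finset_le_card E
        calc finrank ℝ (LinearMap.range (Rmap ∘ₗ S.mulVecLin))
            ≤ finrank ℝ (Submodule.span ℝ (E : Set ({i // i ∈ G} → ℝ))) :=
              Submodule.finrank_mono hsub
          _ ≤ E.card := hspanle
          _ ≤ T.card := by rw [hE]; exact Finset.card_image_le
          _ ≤ s := by rw [hTcard]; exact min_le_left _ _
      have hrank : finrank ℝ V ≤ k + s := by
        calc finrank ℝ V ≤ finrank ℝ ((LinearMap.range (Rmap ∘ₗ K.mulVecLin)) ⊔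
            (LinearMap.range (Rmap ∘ₗ S.mulVecLin)) : Submodule ℝ _) :=
              Submodule.finrank_mono hVle
          _ ≤ finrank ℝ (LinearMap.range (Rmap ∘ₗ K.mulVecLin))
              + finrank ℝ (LinearMap.range (Rmap ∘ₗ S.mulVecLin)) :=
              Submodule.finrank_add_le_finrank_add_finrank _ _
          _ ≤ k + s := Nat.add_le_add h1 h2
      -- per-row bound
      have hrow : ∀ i' : {i // i ∈ G}, lpSens p A (i' : Fin n) ≤ w i' := by
        intro i'
        apply Real.sSup_le _ (hw0 i')
        rintro r ⟨x, hx, rfl⟩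
        set y : {i // i ∈ G} → ℝ := fun j' => A.mulVec x (j' : Fin n) with hy
        have hyV : y ∈ V := ⟨x, rfl⟩
        have hpt := hwpt y hyV i'
        have hsub : ∑ j' : {i // i ∈ G}, |y j'| ^ p = ∑ j ∈ G, |A.mulVec x j| ^ p :=
          Finset.sum_coe_sort G (fun j => |A.mulVec x j| ^ p)
        have hle2 : ∑ j ∈ G, |A.mulVec x j| ^ p ≤ ∑ j, |A.mulVec x j| ^ p :=
          Finset.sum_le_sum_of_subset_of_nonneg (Finset.subset_univ G)
            (fun j _ _ => Real.rpow_nonneg (abs_nonneg _) p)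
        have hD : 0 < ∑ j, |A.mulVec x j| ^ p := Np_pos hp0 hx
        rw [div_le_iff₀ hD]
        calc |A.mulVec x (i' : Fin n)| ^ p = |y i'| ^ p := rfl
          _ ≤ w i' * ∑ j' : {i // i ∈ G}, |y j'| ^ p := hpt
          _ ≤ w i' * ∑ j, |A.mulVec x j| ^ p := by
              apply mul_le_mul_of_nonneg_left _ (hw0 i')
              rw [hsub]; exact hle2
      calc ∑ i ∈ G, lpSens p A i
          = ∑ i' ∈ G.attach, lpSens p A (i' : Fin n) := (Finset.sum_attach G _).symm
        _ ≤ ∑ i' ∈ G.attach, w i' := Finset.sum_le_sum fun i' _ => hrow i'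
        _ = ∑ i' : {i // i ∈ G}, w i' := by rw [Finset.univ_eq_attach]
        _ ≤ (finrank ℝ V : ℝ) ^ p := hwsum
        _ ≤ ((k:ℝ) + s) ^ p := by
            apply Real.rpow_le_rpow (Nat.cast_nonneg _) _ hp0.le
            calc (finrank ℝ V : ℝ) ≤ ((k + s : ℕ) : ℝ) := Nat.cast_le.mpr hrank
              _ = (k:ℝ) + s := by push_cast; ring
    -- sum the groups
    have hfiber : ∑ T ∈ Finset.powersetCard (min s d) Finset.univ,
        ∑ i ∈ Finset.univ.filter (fun i => t i = T), lpSens p A i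
        = ∑ i, lpSens p A i := by
      apply Finset.sum_fiberwise_of_maps_to
      intro i _
      rw [Finset.mem_powersetCard]
      exact ⟨Finset.subset_univ _, ht2 i⟩
    rw [totalSens, ← hfiber]
    calc ∑ T ∈ Finset.powersetCard (min s d) Finset.univ,
        ∑ i ∈ Finset.univ.filter (fun i => t i = T), lpSens p A i
        ≤ ∑ _T ∈ Finset.powersetCard (min s d) Finset.univ, ((k:ℝ) + s) ^ p :=
          Finset.sum_le_sum fun T hT => hgroup T hT
      _ = ((Finset.powersetCard (min s d) (Finset.univ : Finset (Fin d))).card : ℝ)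
            * ((k:ℝ) + s) ^ p := by rw [Finset.sum_const, nsmul_eq_mul]
      _ ≤ (d : ℝ) ^ s * ((k : ℝ) + s) ^ p := by
          apply mul_le_mul_of_nonneg_right _ (Real.rpow_nonneg hks p)
          rw [Finset.card_powersetCard, Finset.card_univ, Fintype.card_fin]
          have : d.choose (min s d) ≤ d ^ s :=
            le_trans (Nat.choose_le_pow d (min s d))
              (Nat.pow_le_pow_right hd (min_le_left _ _))
          calc ((d.choose (min s d) : ℝ)) ≤ ((d ^ s : ℕ) : ℝ) := Nat.cast_le.mpr this
            _ = (d:ℝ) ^ s := by push_cast; ring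
end

section
/- Let 1 ≤ p < ∞ and let A ∈ ℝ^{n×d} be a rank-d matrix with minimum singular value σ_min > 0. Let E ∈ ℝ^{n×d} be any matrix whose operator norm satisfies ‖E‖_2 ≤ σ_min/(2·n^{1+1/p}). Then 𝔖^p(A+E) ≤ 2^p·(𝔖^p(A) + 1). -/
open MeasureTheory Matrix Finset

/-- The Euclidean norm of a finitely supported real vector. -/
noncomputable def l2norm {m : Type*} [Fintype m] (y : m → ℝ) : ℝ :=
  Real.sqrt (∑ i, y i ^ 2)


lemma lpSens_nonneg (p : ℝ) {R C : Type*} [Fintype R] [Fintype C]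
    (A : Matrix R C ℝ) (i : R) : 0 ≤ lpSens p A i := by
  apply Real.sSup_nonneg
  rintro r ⟨x, hx, rfl⟩
  exact div_nonneg (Real.rpow_nonneg (abs_nonneg _) _)
    (Finset.sum_nonneg fun j _ => Real.rpow_nonneg (abs_nonneg _) _)

lemma sum_abs_rpow_pos {R : Type*} [Fintype R] (p : ℝ) {y : R → ℝ} (hy : y ≠ 0) :
    0 < ∑ j, |y j| ^ p := by
  obtain ⟨j, hj⟩ := Function.ne_iff.1 hy
  exact Finset.sum_pos' (fun k _ => Real.rpow_nonneg (abs_nonneg _) _)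
    ⟨j, Finset.mem_univ j, Real.rpow_pos_of_pos (abs_pos.2 hj) p⟩

lemma lpSens_le_one (p : ℝ) {R C : Type*} [Fintype R] [Fintype C]
    (A : Matrix R C ℝ) (i : R) : lpSens p A i ≤ 1 := by
  apply Real.sSup_le _ zero_le_one
  rintro r ⟨x, hx, rfl⟩
  rw [div_le_one (sum_abs_rpow_pos p hx)]
  exact Finset.single_le_sum (fun k _ => Real.rpow_nonneg (abs_nonneg _) _) (Finset.mem_univ i)

lemma lpSens_bddAbove (p : ℝ) {R C : Type*} [Fintype R] [Fintype C]
    (A : Matrix R C ℝ) (i : R) :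
    BddAbove {r : ℝ | ∃ x : C → ℝ, A.mulVec x ≠ 0 ∧
      r = |A.mulVec x i| ^ p / ∑ j, |A.mulVec x j| ^ p} := by
  refine ⟨1, ?_⟩
  rintro r ⟨x, hx, rfl⟩
  rw [div_le_one (sum_abs_rpow_pos p hx)]
  exact Finset.single_le_sum (fun k _ => Real.rpow_nonneg (abs_nonneg _) _) (Finset.mem_univ i)

lemma le_lpSens (p : ℝ) {R C : Type*} [Fintype R] [Fintype C]
    (A : Matrix R C ℝ) (i : R) {x : C → ℝ} (hx : A.mulVec x ≠ 0) :
    |A.mulVec x i| ^ p / ∑ j, |A.mulVec x j| ^ p ≤ lpSens p A i :=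
  le_csSup (lpSens_bddAbove p A i) ⟨x, hx, rfl⟩

lemma l2norm_nonneg {m : Type*} [Fintype m] (y : m → ℝ) : 0 ≤ l2norm y := Real.sqrt_nonneg _

lemma l2norm_eq_zero {m : Type*} [Fintype m] {y : m → ℝ} (h : l2norm y = 0) : y = 0 := by
  have h2 : ∑ i, y i ^ 2 = 0 := by
    have h1 := Real.sqrt_eq_zero'.mp h
    have h0 : (0:ℝ) ≤ ∑ i, y i ^ 2 := Finset.sum_nonneg fun k _ => sq_nonneg _
    linarith
  funext i
  have := (Finset.sum_eq_zero_iff_of_nonneg (fun k _ => sq_nonneg (y k))).1 h2 i (Finset.mem_univ i)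
  exact pow_eq_zero_iff two_ne_zero |>.1 this

lemma rpow_one_div_rpow {x p : ℝ} (hx : 0 ≤ x) (hp : p ≠ 0) : (x ^ p) ^ (1/p : ℝ) = x := by
  rw [← Real.rpow_mul hx, mul_one_div_cancel hp, Real.rpow_one]

lemma rpow_rpow_one_div {x p : ℝ} (hx : 0 ≤ x) (hp : p ≠ 0) : (x ^ (1/p) : ℝ) ^ p = x := by
  rw [← Real.rpow_mul hx, one_div_mul_cancel hp, Real.rpow_one]

lemma abs_le_Np {n : ℕ} {p : ℝ} (hp : 0 < p) (y : Fin n → ℝ) (i : Fin n) :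
    |y i| ≤ (∑ j, |y j| ^ p) ^ (1/p : ℝ) := by
  have h : |y i| = (|y i| ^ p) ^ (1/p : ℝ) := (rpow_one_div_rpow (abs_nonneg _) hp.ne').symm
  rw [h]
  exact Real.rpow_le_rpow (Real.rpow_nonneg (abs_nonneg _) _)
    (Finset.single_le_sum (fun k _ => Real.rpow_nonneg (abs_nonneg _) _) (mem_univ i))
    (by positivity)

lemma abs_le_l2norm {n : ℕ} (y : Fin n → ℝ) (i : Fin n) : |y i| ≤ l2norm y := by
  rw [← Real.sqrt_sq_eq_abs]
  exact Real.sqrt_le_sqrt (Finset.single_le_sum (fun k _ => sq_nonneg (y k)) (mem_univ i))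

lemma l2norm_le_sqrt_mul_Np {n : ℕ} {p : ℝ} (hp : 0 < p) (y : Fin n → ℝ) :
    l2norm y ≤ Real.sqrt n * (∑ j, |y j| ^ p) ^ (1/p : ℝ) := by
  set N := (∑ j, |y j| ^ p) ^ (1/p : ℝ) with hN
  have hN0 : 0 ≤ N := Real.rpow_nonneg (Finset.sum_nonneg fun k _ =>
    Real.rpow_nonneg (abs_nonneg _) _) _
  have h1 : l2norm y ≤ Real.sqrt (n * N ^ 2) := by
    apply Real.sqrt_le_sqrt
    calc ∑ i, y i ^ 2 ≤ ∑ _i : Fin n, N ^ 2 := by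
          apply Finset.sum_le_sum
          intro k _
          rw [← sq_abs]
          exact pow_le_pow_left₀ (abs_nonneg _) (abs_le_Np hp y k) 2
      _ = n * N ^ 2 := by simp [mul_comm]
  calc l2norm y ≤ Real.sqrt (n * N ^ 2) := h1
    _ = Real.sqrt n * N := by
        rw [Real.sqrt_mul (Nat.cast_nonneg n), Real.sqrt_sq hN0]

lemma Np_le_card_mul_l2norm {n : ℕ} {p : ℝ} (hp : 0 < p) (y : Fin n → ℝ) :
    (∑ j, |y j| ^ p) ^ (1/p : ℝ) ≤ (n : ℝ) ^ (1/p : ℝ) * l2norm y := by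
  have hl2 : 0 ≤ l2norm y := Real.sqrt_nonneg _
  have h1 : ∑ j, |y j| ^ p ≤ (n : ℝ) * l2norm y ^ p := by
    calc ∑ j, |y j| ^ p ≤ ∑ _j : Fin n, l2norm y ^ p :=
          Finset.sum_le_sum fun k _ =>
            Real.rpow_le_rpow (abs_nonneg _) (abs_le_l2norm y k) hp.le
      _ = (n : ℝ) * l2norm y ^ p := by simp [mul_comm]
  calc (∑ j, |y j| ^ p) ^ (1/p : ℝ) ≤ ((n : ℝ) * l2norm y ^ p) ^ (1/p : ℝ) :=
        Real.rpow_le_rpow (Finset.sum_nonneg fun k _ =>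
          Real.rpow_nonneg (abs_nonneg _) _) h1 (by positivity)
    _ = (n : ℝ) ^ (1/p : ℝ) * l2norm y := by
        rw [Real.mul_rpow (Nat.cast_nonneg n) (Real.rpow_nonneg hl2 _),
          rpow_one_div_rpow hl2 hp.ne']

set_option maxHeartbeats 1600000 in
/-- **Total ℓ_p sensitivity is robust under small perturbations**: if `A` has full column
rank with minimum singular value at least `σmin > 0`, and the operator norm of `E` is at
most `σmin / (2 n^{1+1/p})`, then `𝔖^p(A+E) ≤ 2^p (𝔖^p(A) + 1)`. -/
theorem total_sensitivity_perturbation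
    (n d : ℕ) (A E : Matrix (Fin n) (Fin d) ℝ) (p σmin : ℝ)
    (hp : 1 ≤ p) (hrank : A.rank = d) (hσ : 0 < σmin)
    (hmin : ∀ x : Fin d → ℝ, σmin * l2norm x ≤ l2norm (A.mulVec x))
    (hE : ∀ x : Fin d → ℝ,
      l2norm (E.mulVec x) ≤ σmin / (2 * (n : ℝ) ^ ((1 : ℝ) + 1 / p)) * l2norm x) :
    totalSens p (A + E) ≤ 2 ^ p * (totalSens p A + 1) := by
  have hp0 : (0:ℝ) < p := lt_of_lt_of_le one_pos hp
  have hSA : 0 ≤ totalSens p A := Finset.sum_nonneg fun i _ => lpSens_nonneg p A i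
  have h2p : (2:ℝ) ≤ 2 ^ p := by
    calc (2:ℝ) = 2 ^ (1:ℝ) := (Real.rpow_one 2).symm
      _ ≤ 2 ^ p := Real.rpow_le_rpow_of_exponent_le one_le_two hp
  have h2p0 : (0:ℝ) < 2 ^ p := Real.rpow_pos_of_pos two_pos p
  rcases lt_or_ge n 3 with hn | hn
  · -- trivial branch : n ≤ 2
    have hn2 : (n:ℝ) ≤ 2 := by exact_mod_cast Nat.lt_succ_iff.mp hn
    calc totalSens p (A+E) ≤ ∑ _i : Fin n, (1:ℝ) :=
          Finset.sum_le_sum fun i _ => lpSens_le_one p (A+E) i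
      _ = n := by simp
      _ ≤ 2 := hn2
      _ ≤ 2 ^ p := h2p
      _ ≤ 2 ^ p * (totalSens p A + 1) := by nlinarith
  · -- main branch : n ≥ 3
    have hn3 : (3:ℝ) ≤ (n:ℝ) := by exact_mod_cast hn
    have hnR : (0:ℝ) < (n:ℝ) := by linarith
    set ε : ℝ := (n:ℝ) ^ (-(1/2 + 1/p) : ℝ) / 2 with hε
    set β : ℝ := (n:ℝ) ^ (-(1/2 : ℝ)) / 2 with hβ
    have hε0 : 0 < ε := div_pos (Real.rpow_pos_of_pos hnR _) two_pos
    have hβ0 : 0 < β := div_pos (Real.rpow_pos_of_pos hnR _) two_pos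
    have hβval : β = 1/(2 * Real.sqrt n) := by
      rw [hβ, Real.rpow_neg hnR.le, ← Real.sqrt_eq_rpow]
      field_simp
    have hsqrtn : (3:ℝ)/2 ≤ Real.sqrt n := by
      rw [show (3:ℝ)/2 = Real.sqrt ((3/2)^2) by rw [Real.sqrt_sq (by norm_num)]]
      apply Real.sqrt_le_sqrt; nlinarith
    have hβ13 : β ≤ 1/3 := by
      rw [hβval, div_le_div_iff₀ (by nlinarith [Real.sqrt_nonneg (n:ℝ)]) (by norm_num)]
      nlinarith
    have h1β : (0:ℝ) < 1 - β := by linarith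
    have hβε : (n:ℝ) ^ (1/p : ℝ) * ε = β := by
      rw [hε, hβ, mul_div_assoc', ← Real.rpow_add hnR,
        show (1/p + -(1/2 + 1/p) : ℝ) = -(1/2 : ℝ) by ring]
    -- per-coordinate key bound
    have key : ∀ i, lpSens p (A+E) i ≤
        (((lpSens p A i) ^ (1/p : ℝ) + ε) / (1 - β)) ^ p := by
      intro i
      set s := (lpSens p A i) ^ (1/p : ℝ) with hs
      have hs0 : 0 ≤ s := Real.rpow_nonneg (lpSens_nonneg p A i) _
      apply Real.sSup_le _ (Real.rpow_nonneg (div_nonneg (by linarith) h1β.le) _)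
      rintro r ⟨x, hx, rfl⟩
      have hax : A.mulVec x ≠ 0 := by
        intro h0
        have h1 := hmin x
        rw [h0, show l2norm (0 : Fin n → ℝ) = 0 by simp [l2norm]] at h1
        have h2 : l2norm x = 0 :=
          le_antisymm (by nlinarith [l2norm_nonneg x]) (l2norm_nonneg x)
        rw [l2norm_eq_zero h2, Matrix.mulVec_zero] at hx
        exact hx rfl
      set a := A.mulVec x with ha
      set e := E.mulVec x with he
      have hyx : (A+E).mulVec x = fun j => a j + e j := by
        rw [Matrix.add_mulVec]; rfl
      set Na := (∑ j, |a j| ^ p) ^ (1/p : ℝ) with hNa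
      have hNa0 : 0 < Na := Real.rpow_pos_of_pos (sum_abs_rpow_pos p hax) _
      have hK : (0:ℝ) < 2 * (n:ℝ) ^ ((1:ℝ) + 1/p) := by
        have := Real.rpow_pos_of_pos hnR ((1:ℝ) + 1/p); linarith
      have hKey1 : l2norm e ≤ ε * Na := by
        have h5 : Real.sqrt n / (2 * (n:ℝ) ^ ((1:ℝ) + 1/p)) = ε := by
          rw [hε, Real.sqrt_eq_rpow,
            show (-(1/2 + 1/p) : ℝ) = 1/2 - ((1:ℝ) + 1/p) + (1/2 : ℝ) - (1/2:ℝ) by ring]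
          rw [show (1/2 - ((1:ℝ) + 1/p) + (1/2 : ℝ) - (1/2:ℝ) : ℝ) = 1/2 - ((1:ℝ) + 1/p) by ring,
            Real.rpow_sub hnR]
          ring
        calc l2norm e ≤ σmin / (2 * (n:ℝ) ^ ((1:ℝ) + 1/p)) * l2norm x := hE x
          _ = (σmin * l2norm x) / (2 * (n:ℝ) ^ ((1:ℝ) + 1/p)) := by ring
          _ ≤ (Real.sqrt n * Na) / (2 * (n:ℝ) ^ ((1:ℝ) + 1/p)) := by
              exact (div_le_div_iff_of_pos_right hK).mpr (le_trans (hmin x) (l2norm_le_sqrt_mul_Np hp0 a))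
          _ = (Real.sqrt n / (2 * (n:ℝ) ^ ((1:ℝ) + 1/p))) * Na := by ring
          _ = ε * Na := by rw [h5]
      have hKey2 : (∑ j, |e j| ^ p) ^ (1/p : ℝ) ≤ β * Na := by
        calc (∑ j, |e j| ^ p) ^ (1/p : ℝ) ≤ (n:ℝ) ^ (1/p:ℝ) * l2norm e :=
              Np_le_card_mul_l2norm hp0 e
          _ ≤ (n:ℝ) ^ (1/p:ℝ) * (ε * Na) :=
              mul_le_mul_of_nonneg_left hKey1 (Real.rpow_nonneg hnR.le _)
          _ = β * Na := by rw [← mul_assoc, hβε]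
      set Ny := (∑ j, |a j + e j| ^ p) ^ (1/p : ℝ) with hNy
      have hMink : Na ≤ Ny + (∑ j, |e j| ^ p) ^ (1/p : ℝ) := by
        have h := Real.Lp_add_le Finset.univ (fun j => a j + e j) (fun j => -(e j)) hp
        simp only [add_neg_cancel_right, abs_neg] at h
        exact h
      have hy_lower : (1 - β) * Na ≤ Ny := by nlinarith [hKey2, hMink]
      have hNy0 : 0 < Ny := lt_of_lt_of_le (mul_pos h1β hNa0) hy_lower
      have hai : |a i| ≤ s * Na := by
        have hSa : 0 < ∑ j, |a j| ^ p := sum_abs_rpow_pos p hax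
        have h2 : |a i| ^ p ≤ lpSens p A i * ∑ j, |a j| ^ p :=
          (div_le_iff₀ hSa).1 (le_lpSens p A i hax)
        have h3 : lpSens p A i * ∑ j, |a j| ^ p = (s * Na) ^ p := by
          rw [Real.mul_rpow hs0 hNa0.le, hs, hNa,
            rpow_rpow_one_div (lpSens_nonneg p A i) hp0.ne',
            rpow_rpow_one_div hSa.le hp0.ne']
        rw [h3] at h2
        have h4 := Real.rpow_le_rpow (Real.rpow_nonneg (abs_nonneg _) _) h2
          (by positivity : (0:ℝ) ≤ 1/p)
        rwa [rpow_one_div_rpow (abs_nonneg _) hp0.ne',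
          rpow_one_div_rpow (mul_nonneg hs0 hNa0.le) hp0.ne'] at h4
      have hnum : |a i + e i| ≤ (s + ε) * Na := by
        calc |a i + e i| ≤ |a i| + |e i| := abs_add_le _ _
          _ ≤ s * Na + l2norm e := add_le_add hai (abs_le_l2norm e i)
          _ ≤ s * Na + ε * Na := by linarith [hKey1]
          _ = (s + ε) * Na := by ring
      rw [hyx]
      simp only
      have hSy : ∑ j, |a j + e j| ^ p = Ny ^ p :=
        (rpow_rpow_one_div (Finset.sum_nonneg fun k _ =>
          Real.rpow_nonneg (abs_nonneg _) _) hp0.ne').symm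
      rw [hSy, ← Real.div_rpow (abs_nonneg _) hNy0.le]
      apply Real.rpow_le_rpow (div_nonneg (abs_nonneg _) hNy0.le) _ hp0.le
      rw [div_le_div_iff₀ hNy0 h1β]
      calc |a i + e i| * (1 - β) ≤ ((s + ε) * Na) * (1 - β) :=
            mul_le_mul_of_nonneg_right hnum h1β.le
        _ = (s + ε) * ((1 - β) * Na) := by ring
        _ ≤ (s + ε) * Ny := mul_le_mul_of_nonneg_left hy_lower (add_nonneg hs0 hε0.le)
    -- sum the per-coordinate bounds
    have hU0 : 0 ≤ (totalSens p A) ^ (1/p : ℝ) := Real.rpow_nonneg hSA _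
    set U := (totalSens p A) ^ (1/p : ℝ) with hU
    have step1 : totalSens p (A+E) ≤
        (∑ i, ((lpSens p A i) ^ (1/p : ℝ) + ε) ^ p) / (1 - β) ^ p := by
      calc totalSens p (A+E) ≤ ∑ i, (((lpSens p A i) ^ (1/p : ℝ) + ε) / (1 - β)) ^ p :=
            Finset.sum_le_sum fun i _ => key i
        _ = (∑ i, ((lpSens p A i) ^ (1/p : ℝ) + ε) ^ p) / (1 - β) ^ p := by
            rw [Finset.sum_div]
            exact Finset.sum_congr rfl fun i _ => Real.div_rpow
              (add_nonneg (Real.rpow_nonneg (lpSens_nonneg p A i) _) hε0.le) h1β.le p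
    have step2 : ∑ i, ((lpSens p A i) ^ (1/p : ℝ) + ε) ^ p ≤ (U + β) ^ p := by
      have hM := Real.Lp_add_le Finset.univ (fun i => (lpSens p A i) ^ (1/p : ℝ))
        (fun _ => ε) hp
      have e1 : ∀ i : Fin n, |(lpSens p A i) ^ (1/p:ℝ) + ε| = (lpSens p A i) ^ (1/p:ℝ) + ε :=
        fun i => abs_of_nonneg (add_nonneg (Real.rpow_nonneg (lpSens_nonneg p A i) _) hε0.le)
      have e2 : ∀ i : Fin n, |(lpSens p A i) ^ (1/p:ℝ)| = (lpSens p A i) ^ (1/p:ℝ) :=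
        fun i => abs_of_nonneg (Real.rpow_nonneg (lpSens_nonneg p A i) _)
      simp only [e1, e2, abs_of_pos hε0] at hM
      have e3 : ∑ i : Fin n, ((lpSens p A i) ^ (1/p:ℝ)) ^ p = totalSens p A := by
        rw [totalSens]
        exact Finset.sum_congr rfl fun i _ => rpow_rpow_one_div (lpSens_nonneg p A i) hp0.ne'
      have e4 : (∑ _i : Fin n, ε ^ p) ^ (1/p : ℝ) = (n:ℝ) ^ (1/p:ℝ) * ε := by
        rw [Finset.sum_const, Finset.card_univ, Fintype.card_fin, nsmul_eq_mul,
          Real.mul_rpow (Nat.cast_nonneg n) (Real.rpow_nonneg hε0.le _),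
          rpow_one_div_rpow hε0.le hp0.ne']
      rw [e3, e4, hβε] at hM
      have hXnn : (0:ℝ) ≤ ∑ i, ((lpSens p A i) ^ (1/p : ℝ) + ε) ^ p :=
        Finset.sum_nonneg fun i _ => Real.rpow_nonneg
          (add_nonneg (Real.rpow_nonneg (lpSens_nonneg p A i) _) hε0.le) _
      calc ∑ i, ((lpSens p A i) ^ (1/p : ℝ) + ε) ^ p
          = ((∑ i, ((lpSens p A i) ^ (1/p : ℝ) + ε) ^ p) ^ (1/p:ℝ)) ^ p :=
            (rpow_rpow_one_div hXnn hp0.ne').symm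
        _ ≤ (U + β) ^ p := Real.rpow_le_rpow (Real.rpow_nonneg hXnn _) hM hp0.le
    set M := max U 1 with hM
    have hM1 : (1:ℝ) ≤ M := le_max_right _ _
    have hUM : U ≤ M := le_max_left _ _
    clear_value ε β U M
    have h7 : (U + β) / (1 - β) ≤ 2 * M := by
      rw [div_le_iff₀ h1β]
      have hint : (1 + 2*M) * β ≤ (1 + 2*M) * (1/3) :=
        mul_le_mul_of_nonneg_left hβ13 (by linarith)
      linarith [hint, hUM, hM1]
    calc totalSens p (A+E)
        ≤ (∑ i, ((lpSens p A i) ^ (1/p : ℝ) + ε) ^ p) / (1 - β) ^ p := step1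
      _ ≤ (U + β) ^ p / (1 - β) ^ p :=
          (div_le_div_iff_of_pos_right (Real.rpow_pos_of_pos h1β p)).mpr step2
      _ = ((U + β) / (1 - β)) ^ p := (Real.div_rpow (add_nonneg hU0 hβ0.le) h1β.le p).symm
      _ ≤ (2 * M) ^ p := Real.rpow_le_rpow (div_nonneg (add_nonneg hU0 hβ0.le) h1β.le)
          h7 hp0.le
      _ = 2 ^ p * M ^ p := Real.mul_rpow (by norm_num) (by linarith)
      _ ≤ 2 ^ p * (totalSens p A + 1) := by
          apply mul_le_mul_of_nonneg_left _ h2p0.le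
          rcases max_cases U 1 with ⟨hMe, _⟩ | ⟨hMe, _⟩
          · rw [hM, hMe, hU, rpow_rpow_one_div hSA hp0.ne']; linarith
          · rw [hM, hMe, Real.one_rpow]; linarith
end

section
/- Let 1 ≤ p < ∞, let A ∈ ℝ^{n×d}, and let 0 < α < 1. Set k = ⌈1/α⌉ (so k ≤ 2/α). Then the matrix A' ∈ ℝ^{nk×d} obtained by replacing each row a_i of A with k copies of a_i/k^{1/p} satisfies: (i) σ_j^q(A') ≤ α for every row index j ∈ [nk] and every 1 ≤ q < ∞; and (ii) for every 1 ≤ q < ∞ and every x ∈ ℝ^d, ‖A'x‖_q = k^{1/q − 1/p}·‖Ax‖_q. -/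
open MeasureTheory Matrix Finset

/-- The entrywise ℓ_p norm of a vector. -/
noncomputable def lpNorm (p : ℝ) {m : Type*} [Fintype m] (y : m → ℝ) : ℝ :=
  (∑ i, |y i| ^ p) ^ (1 / p)

/-- **Flattening all sensitivities**: replacing each row `a_i` of `A` by `k = ⌈1/α⌉`
copies of `a_i / k^{1/p}` makes every `ℓ_q` sensitivity at most `α` and scales every
`ℓ_q` norm by exactly `k^{1/q − 1/p}`. -/
theorem flatten_all_sensitivities
    (n d : ℕ) (A : Matrix (Fin n) (Fin d) ℝ) (p α : ℝ)
    (hp : 1 ≤ p) (hα0 : 0 < α) (hα1 : α < 1) :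
    ∀ k : ℕ, k = ⌈1 / α⌉₊ →
      ∀ A' : Matrix (Fin n × Fin k) (Fin d) ℝ,
        (∀ i : Fin n, ∀ c : Fin k, ∀ l : Fin d, A' (i, c) l = A i l / (k : ℝ) ^ (1 / p)) →
        (∀ j : Fin n × Fin k, ∀ q : ℝ, 1 ≤ q → lpSens q A' j ≤ α) ∧
        (∀ q : ℝ, 1 ≤ q → ∀ x : Fin d → ℝ,
          lpNorm q (A'.mulVec x) = (k : ℝ) ^ (1 / q - 1 / p) * lpNorm q (A.mulVec x)) := by
  intro k hk A' hA'
  have hα0' : (0:ℝ) < 1 / α := by positivity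
  have hkpos : 0 < k := by rw [hk]; exact Nat.ceil_pos.mpr hα0'
  have hkR : (0:ℝ) < (k:ℝ) := by exact_mod_cast hkpos
  have hkα : 1 / α ≤ (k:ℝ) := by rw [hk]; exact Nat.le_ceil _
  have h1 : 1 ≤ (k:ℝ) * α := by
    have := (div_le_iff₀ hα0).mp hkα; linarith
  have hinvk : 1 / (k:ℝ) ≤ α := by rw [div_le_iff₀ hkR]; linarith
  set K := (k:ℝ) ^ (1/p) with hK
  have hKpos : 0 < K := Real.rpow_pos_of_pos hkR _
  have hmv : ∀ (x : Fin d → ℝ) (j : Fin n × Fin k),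
      A'.mulVec x j = A.mulVec x j.1 / K := by
    rintro x ⟨i, c⟩
    simp only [Matrix.mulVec, dotProduct, hA', div_mul_eq_mul_div, ← Finset.sum_div]
  constructor
  · rintro ⟨i, c⟩ q hq
    have hq0 : (0:ℝ) < q := by linarith
    apply Real.sSup_le _ hα0.le
    rintro r ⟨x, hx, rfl⟩
    set v := A.mulVec x with hv
    have hsum : ∑ j : Fin n × Fin k, |A'.mulVec x j| ^ q
        = (k:ℝ) * ∑ i', |v i' / K| ^ q := by
      rw [Fintype.sum_prod_type]
      simp only [hmv]
      simp [Finset.sum_const, Finset.card_univ, nsmul_eq_mul, Finset.mul_sum]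
      rfl
    have hpos : 0 < ∑ j : Fin n × Fin k, |A'.mulVec x j| ^ q := by
      obtain ⟨j, hj⟩ := Function.ne_iff.mp hx
      apply Finset.sum_pos' (fun _ _ => Real.rpow_nonneg (abs_nonneg _) _)
      exact ⟨j, Finset.mem_univ _, Real.rpow_pos_of_pos (abs_pos.mpr hj) _⟩
    have hbound : (k:ℝ) * |A'.mulVec x (i, c)| ^ q
        ≤ ∑ j : Fin n × Fin k, |A'.mulVec x j| ^ q := by
      rw [hsum, hmv x (i, c)]
      have : |v i / K| ^ q ≤ ∑ i', |v i' / K| ^ q :=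
        Finset.single_le_sum (f := fun i' => |v i' / K| ^ q)
          (fun i' _ => Real.rpow_nonneg (abs_nonneg _) _) (Finset.mem_univ i)
      nlinarith
    rw [div_le_iff₀ hpos]
    nlinarith [mul_le_mul_of_nonneg_right hinvk hpos.le]
  · intro q hq x
    have hq0 : (0:ℝ) < q := by linarith
    have hT : (0:ℝ) ≤ ∑ i, |A.mulVec x i| ^ q :=
      Finset.sum_nonneg fun i _ => Real.rpow_nonneg (abs_nonneg _) _
    unfold _root_.lpNorm
    have hsum : ∑ j : Fin n × Fin k, |A'.mulVec x j| ^ q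
        = (k:ℝ) * ((∑ i, |A.mulVec x i| ^ q) / K ^ q) := by
      rw [Fintype.sum_prod_type]
      simp only [hmv, abs_div, abs_of_pos hKpos,
        Real.div_rpow (abs_nonneg _) hKpos.le]
      simp only [Finset.sum_const, Finset.card_univ, Fintype.card_fin, nsmul_eq_mul,
        ← Finset.mul_sum, ← Finset.sum_div]
    rw [hsum, Real.mul_rpow hkR.le (div_nonneg hT (Real.rpow_nonneg hKpos.le _)),
      Real.div_rpow hT (Real.rpow_nonneg hKpos.le _),
      ← Real.rpow_mul hKpos.le, mul_one_div_cancel hq0.ne', Real.rpow_one,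
      Real.rpow_sub hkR]
    ring
end
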